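/- If a graph G is proportionally k-choosable, then G is proportionally (k+1)-choosable. -/

import Mathlib

open Finset

variable {V : Type*}

/-- The size of the color class of `c` under coloring `f`. -/
def colorClass [Fintype V] (f : V → ℕ) (c : ℕ) : ℕ :=
  (Finset.univ.filter fun v => f v = c).card

/-- The multiplicity of color `c` in the list assignment `L`. -/
def eta [Fintype V] (L : V → Finset ℕ) (c : ℕ) : ℕ :=
  (Finset.univ.filter fun v => c ∈ L v).card

/-- `f` is a proper `L`-coloring of `G`. -/
def IsProperListColoring (G : SimpleGraph V) (L : V → Finset ℕ) (f : V → ℕ) : Prop :=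
  (∀ v, f v ∈ L v) ∧ ∀ u v, G.Adj u v → f u ≠ f v

/-- `f` is a proportional `L`-coloring of `G`, for `k`-assignments `L`:
each palette color's class has size `⌊η/k⌋` or `⌈η/k⌉`. -/
def IsProportionalColoring [Fintype V] (G : SimpleGraph V) (L : V → Finset ℕ) (k : ℕ)
    (f : V → ℕ) : Prop :=
  IsProperListColoring G L f ∧
  ∀ c : ℕ, (∃ v, c ∈ L v) →
    colorClass f c = eta L c / k ∨ colorClass f c = (eta L c + k - 1) / k

/-- `G` is proportionally `k`-choosable. -/
def ProportionallyChoosable [Fintype V] (G : SimpleGraph V) (k : ℕ) : Prop :=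
  ∀ L : V → Finset ℕ, (∀ v, (L v).card = k) →
    ∃ f : V → ℕ, IsProportionalColoring G L k f

namespace PropAux

lemma sub_helper1 (η x a tot : ℕ) (h : x ≤ η - a) (h2 : a ≤ η) (h3 : η = x + tot) : a ≤ tot := by
  omega

lemma sub_helper2 (η x b tot : ℕ) (h : η - b ≤ x) (h3 : η = x + tot) : tot ≤ b := by
  omega

/-- core division arithmetic -/
lemma core (k q r η η' cl : ℕ) (hk : 0 < k) (hη : η = (k+1) * q + r) (hr : r < k+1)
    (h1 : q * k ≤ η') (h2 : η' ≤ (q + (if r = 0 then 0 else 1)) * k)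
    (hcl : cl = η' / k ∨ cl = (η' + k - 1) / k) :
    cl = η / (k+1) ∨ cl = (η + (k+1) - 1) / (k+1) := by
  set s : ℕ := if r = 0 then 0 else 1 with hs
  have hk1 : (0:ℕ) < k + 1 := by omega
  have hq : η / (k+1) = q := by
    rw [hη, Nat.mul_add_div hk1, Nat.div_eq_of_lt hr]; omega
  have hq2 : (η + (k+1) - 1) / (k+1) = q + s := by
    by_cases hr0 : r = 0
    · have e1 : η + (k+1) - 1 = (k+1) * q + k := by omega
      rw [e1, Nat.mul_add_div hk1, Nat.div_eq_of_lt (show k < k+1 by omega)]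
      simp [hs, hr0]
    · have e0 : (k+1) * (q+1) = (k+1) * q + (k+1) := by ring
      have e2 : η + (k+1) - 1 = (k+1) * (q+1) + (r-1) := by omega
      rw [e2, Nat.mul_add_div hk1, Nat.div_eq_of_lt (show r-1 < k+1 by omega)]
      simp [hs, hr0]
  have low : q ≤ cl := by
    have l1 : q ≤ η' / k := (Nat.le_div_iff_mul_le hk).2 h1
    have l2 : η' / k ≤ (η' + k - 1) / k := Nat.div_le_div_right (by omega)
    rcases hcl with h | h <;> omega
  have hu : ((q+s) * k + (k-1)) / k = q + s := by
    rw [Nat.mul_comm (q+s) k, Nat.mul_add_div hk, Nat.div_eq_of_lt (show k-1 < k by omega)]; omega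
  have high : cl ≤ q + s := by
    rcases hcl with h | h
    · have : η' / k ≤ ((q+s) * k + (k-1)) / k := Nat.div_le_div_right (by omega)
      omega
    · have : (η' + k - 1) / k ≤ ((q+s) * k + (k-1)) / k := Nat.div_le_div_right (by omega)
      omega
  rw [hq, hq2]
  have hs1 : s ≤ 1 := by rw [hs]; split <;> omega
  omega

lemma helperU (k q r η : ℕ) (hη : η = (k+1)*q + r) : η ≤ (k+1) * (η - q*k) := by
  have e0 : (k+1)*q = q*k + q := by ring
  have e : η - q*k = q + r := by omega
  have h2 : (k+1)*(q+r) = (k+1)*q + (k+1)*r := by ring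
  have h3 : r ≤ (k+1)*r := Nat.le_mul_of_pos_left r (by omega)
  rw [e]
  omega

lemma helperLo (k q r η : ℕ) (hη : η = (k+1)*q + r) (hr : r < k+1) :
    (k+1) * (η - (q + (if r = 0 then 0 else 1))*k) ≤ η := by
  by_cases hr0 : r = 0
  · simp only [hr0, reduceIte, Nat.add_zero]
    have e0 : (k+1)*q = q*k + q := by ring
    have e : η - q*k = q := by omega
    rw [e]
    omega
  · simp only [if_neg hr0]
    have e0 : (k+1)*q = q*k + q := by ring
    have e1 : (q+1)*k = q*k + k := by ring
    have h1 : η ≤ (q+1)*k + (q+1) := by omega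
    by_cases hle : (q+1)*k ≤ η
    · obtain ⟨t, ht⟩ : ∃ t, η - (q+1)*k = t := ⟨_, rfl⟩
      rw [ht]
      have het : η = (q+1)*k + t := by omega
      have e' : t ≤ q+1 := by omega
      have e2 : k*t ≤ k*(q+1) := Nat.mul_le_mul_left k e'
      have e3 : (k+1)*t = k*t + t := by ring
      have e4 : (q+1)*k = k*(q+1) := by ring
      omega
    · have : η - (q+1)*k = 0 := by omega
      rw [this]
      omega

variable [Fintype V]

/-- upper quota for color `c` -/
def qq (L : V → Finset ℕ) (k c : ℕ) : ℕ := eta L c / (k+1)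

def Uc (L : V → Finset ℕ) (k c : ℕ) : ℕ := eta L c - qq L k c * k

def Lo (L : V → Finset ℕ) (k c : ℕ) : ℕ :=
  eta L c - (qq L k c + (if eta L c % (k+1) = 0 then 0 else 1)) * k

variable (L : V → Finset ℕ) (k c : ℕ)

lemma eta_eq : eta L c = (k+1) * qq L k c + eta L c % (k+1) :=
  (Nat.div_add_mod (eta L c) (k+1)).symm

lemma qmul_le : qq L k c * k ≤ eta L c :=
  calc qq L k c * k ≤ qq L k c * (k+1) := Nat.mul_le_mul_left _ (by omega)
    _ ≤ eta L c := Nat.div_mul_le_self _ _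

lemma lo_le_U : Lo L k c ≤ Uc L k c := by
  unfold Lo Uc
  have : qq L k c * k ≤ (qq L k c + (if eta L c % (k+1) = 0 then 0 else 1)) * k :=
    Nat.mul_le_mul_right _ (by omega)
  omega

lemma eta_le_U : eta L c ≤ (k+1) * Uc L k c :=
  helperU k (qq L k c) (eta L c % (k+1)) (eta L c) (eta_eq L k c)

lemma lo_mul_le : (k+1) * Lo L k c ≤ eta L c :=
  helperLo k (qq L k c) (eta L c % (k+1)) (eta L c) (eta_eq L k c)
    (Nat.mod_lt _ (by omega))

lemma sum_eta (S : Finset ℕ) : ∑ c ∈ S, eta L c = ∑ v : V, (S ∩ L v).card := by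
  unfold eta
  simp only [Finset.card_filter]
  rw [Finset.sum_comm]
  refine Finset.sum_congr rfl fun v _ => ?_
  rw [← Finset.card_filter, Finset.filter_mem_eq_inter]

lemma card_biUnion_fiber (S : Finset ℕ) (g : ℕ → Finset (ℕ × ℕ))
    (hg : ∀ c, ∀ p ∈ g c, p.1 = c) :
    (S.biUnion g).card = ∑ c ∈ S, (g c).card := by
  refine Finset.card_biUnion fun a _ b _ hab => ?_
  rw [Function.onFun, Finset.disjoint_left]
  intro p hpa hpb
  exact hab ((hg a p hpa).symm.trans (hg b p hpb))

end PropAux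

theorem stmt_1 [Fintype V] (G : SimpleGraph V) (k : ℕ)
    (h : ProportionallyChoosable G k) :
    ProportionallyChoosable G (k + 1) := by
  classical
  intro L hL
  rcases isEmpty_or_nonempty V with hV | hV
  · exact ⟨fun _ => 0, ⟨⟨fun v => (IsEmpty.false v).elim, fun u _ _ => (IsEmpty.false u).elim⟩,
      fun c hc => (hc.elim fun v _ => (IsEmpty.false v).elim)⟩⟩
  rcases Nat.eq_zero_or_pos k with hk0 | hk
  · obtain ⟨f, ⟨hf1, _⟩, _⟩ := h (fun _ => ∅) (fun v => by simp [hk0])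
    exact absurd (hf1 (Classical.arbitrary V)) (by simp)
  open PropAux in
  -- setup
  set n := Fintype.card V with hn
  set P : Finset ℕ := Finset.univ.biUnion L with hP
  set SU : ℕ := ∑ c ∈ P, Uc L k c with hSU
  have hsumP : ∑ c ∈ P, eta L c = n * (k+1) := by
    rw [sum_eta]
    rw [show (∑ v : V, (P ∩ L v).card) = ∑ v : V, (k+1) from
      Finset.sum_congr rfl fun v _ => by
        rw [Finset.inter_eq_right.2 (fun c hc => Finset.mem_biUnion.2 ⟨v, Finset.mem_univ v, hc⟩),
          hL v]]
    simp [Finset.sum_const, hn, Nat.mul_comm]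
  have hnSU : n ≤ SU := by
    have h1 : (k+1) * n ≤ (k+1) * SU := by
      calc (k+1) * n = n * (k+1) := Nat.mul_comm _ _
        _ = ∑ c ∈ P, eta L c := hsumP.symm
        _ ≤ ∑ c ∈ P, (k+1) * Uc L k c := Finset.sum_le_sum fun c _ => eta_le_U L k c
        _ = (k+1) * SU := (Finset.mul_sum _ _ _).symm
    exact Nat.le_of_mul_le_mul_left h1 (by omega)
  set M : ℕ := SU - n with hM
  -- the bipartite system
  set t : V ⊕ Fin M → Finset (ℕ × ℕ) :=
    Sum.elim (fun v => (L v).biUnion fun c => ({c} : Finset ℕ) ×ˢ Finset.range (Uc L k c))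
      (fun _ => P.biUnion fun c => ({c} : Finset ℕ) ×ˢ Finset.Ico (Lo L k c) (Uc L k c))
    with ht
  -- Hall's condition
  have hall : ∀ s : Finset (V ⊕ Fin M), s.card ≤ (s.biUnion t).card := by
    intro s
    set A := s.toLeft with hA
    set D := s.toRight with hD
    have hsc : s.card = A.card + D.card := (Finset.card_toLeft_add_card_toRight).symm
    set CA := A.biUnion L with hCA
    have hCAP : CA ⊆ P := by
      intro c hc
      obtain ⟨a, _, hca⟩ := Finset.mem_biUnion.1 hc
      exact Finset.mem_biUnion.2 ⟨a, Finset.mem_univ _, hca⟩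
    have hsub1 : CA.biUnion (fun c => ({c} : Finset ℕ) ×ˢ Finset.range (Uc L k c)) ⊆
        s.biUnion t := by
      rw [hCA, Finset.biUnion_biUnion]
      intro p hp
      obtain ⟨a, haA, hpa⟩ := Finset.mem_biUnion.1 hp
      exact Finset.mem_biUnion.2 ⟨Sum.inl a, Finset.mem_toLeft.1 haA, hpa⟩
    have hAn : A.card ≤ n := by rw [hn]; exact Finset.card_le_univ A
    have keyA : A.card * (k+1) ≤ ∑ c ∈ CA, eta L c := by
      rw [sum_eta]
      calc A.card * (k+1) = ∑ _v ∈ A, (k+1) := by rw [Finset.sum_const, smul_eq_mul]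
        _ = ∑ v ∈ A, (CA ∩ L v).card := Finset.sum_congr rfl fun v hv => by
            rw [Finset.inter_eq_right.2 (Finset.subset_biUnion_of_mem L hv), hL v]
        _ ≤ ∑ v : V, (CA ∩ L v).card := Finset.sum_le_sum_of_subset (Finset.subset_univ A)
    rcases Finset.eq_empty_or_nonempty D with hDe | ⟨d, hd⟩
    · -- no dummy vertices in s
      have hAcard : A.card ≤ ∑ c ∈ CA, Uc L k c := by
        have h1 : (k+1) * A.card ≤ (k+1) * ∑ c ∈ CA, Uc L k c := by
          calc (k+1) * A.card = A.card * (k+1) := Nat.mul_comm _ _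
            _ ≤ ∑ c ∈ CA, eta L c := keyA
            _ ≤ ∑ c ∈ CA, (k+1) * Uc L k c := Finset.sum_le_sum fun c _ => eta_le_U L k c
            _ = (k+1) * ∑ c ∈ CA, Uc L k c := (Finset.mul_sum _ _ _).symm
        exact Nat.le_of_mul_le_mul_left h1 (by omega)
      have hcard : (CA.biUnion (fun c => ({c} : Finset ℕ) ×ˢ Finset.range (Uc L k c))).card
          = ∑ c ∈ CA, Uc L k c := by
        rw [card_biUnion_fiber _ _ (fun c p hp => by
          simp only [Finset.mem_product, Finset.mem_singleton] at hp
          exact hp.1)]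
        refine Finset.sum_congr rfl fun c _ => ?_
        simp [Finset.card_product]
      calc s.card = A.card := by rw [hsc, hDe]; simp
        _ ≤ ∑ c ∈ CA, Uc L k c := hAcard
        _ = _ := hcard.symm
        _ ≤ (s.biUnion t).card := Finset.card_le_card hsub1
    · -- a dummy vertex is present
      have hsub2 : (P.biUnion fun c => ({c} : Finset ℕ) ×ˢ Finset.Ico (Lo L k c) (Uc L k c)) ⊆
          s.biUnion t :=
        Finset.subset_biUnion_of_mem t (Finset.mem_toRight.1 hd)
      set gfun : ℕ → Finset (ℕ × ℕ) := fun c =>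
        if c ∈ CA then ({c} : Finset ℕ) ×ˢ Finset.range (Uc L k c)
        else ({c} : Finset ℕ) ×ˢ Finset.Ico (Lo L k c) (Uc L k c) with hgfun
      have hBig : P.biUnion gfun ⊆ s.biUnion t := by
        intro p hp
        obtain ⟨c, hcP', hpg⟩ := Finset.mem_biUnion.1 hp
        by_cases hc : c ∈ CA
        · exact hsub1 (Finset.subset_biUnion_of_mem _ hc (by simpa [hgfun, hc] using hpg))
        · exact hsub2 (Finset.subset_biUnion_of_mem _ hcP' (by simpa [hgfun, hc] using hpg))
      have hBigcard : (P.biUnion gfun).card =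
          ∑ c ∈ P \ CA, (Uc L k c - Lo L k c) + ∑ c ∈ CA, Uc L k c := by
        rw [card_biUnion_fiber _ _ (fun c p hp => by
          simp only [hgfun] at hp
          split at hp <;>
            (simp only [Finset.mem_product, Finset.mem_singleton] at hp; exact hp.1))]
        rw [← Finset.sum_sdiff hCAP]
        congr 1
        · refine Finset.sum_congr rfl fun c hc => ?_
          simp only [hgfun, if_neg (Finset.mem_sdiff.1 hc).2]
          simp [Finset.card_product, Nat.card_Ico]
        · refine Finset.sum_congr rfl fun c hc => ?_
          simp only [hgfun, if_pos hc]
          simp [Finset.card_product]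
      have keyB : A.card + ∑ c ∈ P \ CA, Lo L k c ≤ n := by
        have hb1 : (k+1) * (∑ c ∈ P \ CA, Lo L k c) ≤ ∑ c ∈ P \ CA, eta L c := by
          rw [Finset.mul_sum]
          exact Finset.sum_le_sum fun c _ => lo_mul_le L k c
        have hb2 : ∑ c ∈ P \ CA, eta L c = ∑ v : V, ((P \ CA) ∩ L v).card := sum_eta L _
        have hb3 : ∀ v : V, ((P \ CA) ∩ L v).card ≤ if v ∈ A then 0 else (k+1) := by
          intro v
          by_cases hv : v ∈ A
          · rw [if_pos hv]
            have : (P \ CA) ∩ L v = ∅ := by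
              rw [Finset.eq_empty_iff_forall_notMem]
              intro c hc
              obtain ⟨hc1, hc2⟩ := Finset.mem_inter.1 hc
              exact (Finset.mem_sdiff.1 hc1).2 (Finset.mem_biUnion.2 ⟨v, hv, hc2⟩)
            rw [this]
            simp
          · rw [if_neg hv]
            calc ((P \ CA) ∩ L v).card ≤ (L v).card :=
                  Finset.card_le_card Finset.inter_subset_right
              _ = k+1 := hL v
        have hb4 : ∑ v : V, (if v ∈ A then 0 else (k+1)) = (n - A.card) * (k+1) := by
          rw [Finset.sum_ite, Finset.sum_const, Finset.sum_const, smul_eq_mul, smul_eq_mul,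
            Nat.mul_zero, Nat.zero_add]
          congr 1
          have h5 := Finset.card_filter_add_card_filter_not
            (s := (Finset.univ : Finset V)) (p := fun v => v ∈ A)
          rw [Finset.filter_univ_mem] at h5
          rw [Finset.card_univ] at h5
          omega
        have hb5 : ∑ v : V, ((P \ CA) ∩ L v).card ≤ (n - A.card) * (k+1) := by
          rw [← hb4]
          exact Finset.sum_le_sum fun v _ => hb3 v
        set S := ∑ c ∈ P \ CA, Lo L k c with hS
        set a := A.card with ha
        have E1 : (k+1) * (a + S) = (k+1) * a + (k+1) * S := by ring
        have E2 : (n - a) * (k+1) = (k+1) * (n - a) := by ring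
        have E3 : (k+1) * a + (k+1) * (n - a) = (k+1) * n := by
          rw [← Nat.mul_add]
          congr 1
          omega
        have hfin : (k+1) * (a + S) ≤ (k+1) * n := by omega
        exact Nat.le_of_mul_le_mul_left hfin (by omega)
      have hDM : D.card ≤ M := by
        calc D.card ≤ Fintype.card (Fin M) := Finset.card_le_univ D
          _ = M := Fintype.card_fin M
      have hsum_split : ∑ c ∈ P \ CA, Uc L k c + ∑ c ∈ CA, Uc L k c = SU :=
        Finset.sum_sdiff hCAP
      have hsum_sub : ∑ c ∈ P \ CA, (Uc L k c - Lo L k c) + ∑ c ∈ P \ CA, Lo L k c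
          = ∑ c ∈ P \ CA, Uc L k c := by
        rw [← Finset.sum_add_distrib]
        exact Finset.sum_congr rfl fun c _ => Nat.sub_add_cancel (lo_le_U L k c)
      have := Finset.card_le_card hBig
      omega
  -- apply Hall's theorem
  obtain ⟨F, hFinj, hFmem⟩ := (Finset.all_card_le_biUnion_card_iff_exists_injective t).1 hall
  set g : V → ℕ := fun v => (F (Sum.inl v)).1 with hg
  have hgmem : ∀ v, g v ∈ L v ∧ (F (Sum.inl v)).2 < Uc L k (g v) := by
    intro v
    have hm := hFmem (Sum.inl v)
    rw [ht] at hm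
    simp only [Sum.elim_inl, Finset.mem_biUnion, Finset.mem_product, Finset.mem_singleton,
      Finset.mem_range] at hm
    obtain ⟨c, hc, h1, h2⟩ := hm
    constructor
    · show (F (Sum.inl v)).1 ∈ L v
      rw [h1]; exact hc
    · show (F (Sum.inl v)).2 < Uc L k (F (Sum.inl v)).1
      rw [h1]; exact h2
  -- upper bound on color usage
  have hxU : ∀ c, colorClass g c ≤ Uc L k c := by
    intro c
    unfold colorClass
    rw [← Finset.card_range (Uc L k c)]
    apply Finset.card_le_card_of_injOn (fun v => (F (Sum.inl v)).2)
    · intro v hv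
      simp only [Finset.coe_filter, Set.mem_setOf_eq] at hv
      rw [Finset.mem_coe, Finset.mem_range, ← hv.2]
      exact (hgmem v).2
    · intro a haA b hbB hab
      simp only [Finset.coe_filter, Set.mem_setOf_eq] at haA hbB
      have : F (Sum.inl a) = F (Sum.inl b) := by
        have h1 : (F (Sum.inl a)).1 = (F (Sum.inl b)).1 := by
          show g a = g b
          rw [haA.2, hbB.2]
        exact Prod.ext h1 hab
      exact Sum.inl.inj (hFinj this)
  -- surjectivity onto all slots
  set allS : Finset (ℕ × ℕ) :=
    P.biUnion (fun c => ({c} : Finset ℕ) ×ˢ Finset.range (Uc L k c)) with hallS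
  have hallScard : allS.card = SU := by
    rw [hallS, PropAux.card_biUnion_fiber _ _ (fun c p hp => by
      simp only [Finset.mem_product, Finset.mem_singleton] at hp
      exact hp.1)]
    exact Finset.sum_congr rfl fun c _ => by simp [Finset.card_product]
  have himage : Finset.univ.image F = allS := by
    apply Finset.eq_of_subset_of_card_le
    · intro p hp
      obtain ⟨x, _, hx⟩ := Finset.mem_image.1 hp
      have hm := hFmem x
      cases x with
      | inl v =>
        rw [ht] at hm
        simp only [Sum.elim_inl, Finset.mem_biUnion] at hm
        obtain ⟨c, hc, hpc⟩ := hm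
        rw [hallS]
        exact Finset.mem_biUnion.2 ⟨c, Finset.mem_biUnion.2 ⟨v, Finset.mem_univ v, hc⟩,
          hx ▸ hpc⟩
      | inr d =>
        rw [ht] at hm
        simp only [Sum.elim_inr, Finset.mem_biUnion, Finset.mem_product, Finset.mem_singleton,
          Finset.mem_Ico] at hm
        obtain ⟨c, hc, h1, h2⟩ := hm
        rw [hallS]
        refine Finset.mem_biUnion.2 ⟨c, hc, ?_⟩
        rw [← hx]
        simp only [Finset.mem_product, Finset.mem_singleton, Finset.mem_range]
        exact ⟨h1, h2.2⟩
    · rw [hallScard, Finset.card_image_of_injective _ hFinj, Finset.card_univ,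
        Fintype.card_sum, Fintype.card_fin]
      rw [← hn]
      omega
  -- lower bound on color usage
  have hxLo : ∀ c ∈ P, Lo L k c ≤ colorClass g c := by
    intro c hc
    have hsurj : ∀ j, j < Lo L k c → ∃ v, g v = c ∧ (F (Sum.inl v)).2 = j := by
      intro j hj
      have hmem : ((c, j) : ℕ × ℕ) ∈ allS := by
        rw [hallS]
        refine Finset.mem_biUnion.2 ⟨c, hc, ?_⟩
        simp only [Finset.mem_product, Finset.mem_singleton, Finset.mem_range]
        exact ⟨by simp, lt_of_lt_of_le hj (PropAux.lo_le_U L k c)⟩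
      rw [← himage] at hmem
      obtain ⟨x, _, hx⟩ := Finset.mem_image.1 hmem
      cases x with
      | inl v =>
        refine ⟨v, ?_, ?_⟩
        · show (F (Sum.inl v)).1 = c
          rw [hx]
        · rw [hx]
      | inr d =>
        exfalso
        have hm := hFmem (Sum.inr d)
        rw [ht] at hm
        simp only [Sum.elim_inr, Finset.mem_biUnion, Finset.mem_product, Finset.mem_singleton,
          Finset.mem_Ico] at hm
        obtain ⟨c', _, h1, h2⟩ := hm
        rw [hx] at h1 h2
        have hcc : c = c' := h1
        have hjj : Lo L k c' ≤ j ∧ j < Uc L k c' := h2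
        subst hcc
        omega
    unfold colorClass
    rw [← Finset.card_range (Lo L k c)]
    apply Finset.card_le_card_of_surjOn (fun v => (F (Sum.inl v)).2)
    intro j hj
    simp only [Finset.coe_range, Set.mem_Iio] at hj
    obtain ⟨v, hv1, hv2⟩ := hsurj j hj
    refine ⟨v, ?_, hv2⟩
    simp only [Finset.coe_filter, Set.mem_setOf_eq]
    exact ⟨Finset.mem_univ v, hv1⟩
  -- the reduced assignment
  set L' : V → Finset ℕ := fun v => (L v).erase (g v) with hL'
  have hL'card : ∀ v, (L' v).card = k := by
    intro v
    rw [hL', Finset.card_erase_of_mem (hgmem v).1, hL v]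
    omega
  have hsplit : ∀ c, eta L c = colorClass g c + eta L' c := by
    intro c
    have hfc := Finset.card_filter_add_card_filter_not
      (s := Finset.univ.filter fun v => c ∈ L v) (p := fun v => g v = c)
    have e1 : (Finset.univ.filter fun v => c ∈ L v).filter (fun v => g v = c)
        = Finset.univ.filter fun v => g v = c := by
      ext v
      simp only [Finset.mem_filter, Finset.mem_univ, true_and, Finset.filter_filter]
      constructor
      · exact fun hh => hh.2
      · exact fun hh => ⟨hh ▸ (hgmem v).1, hh⟩
    have e2 : (Finset.univ.filter fun v => c ∈ L v).filter (fun v => ¬ g v = c)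
        = Finset.univ.filter fun v => c ∈ L' v := by
      ext v
      simp only [Finset.mem_filter, Finset.mem_univ, true_and, hL', Finset.mem_erase]
      constructor
      · exact fun hh => ⟨fun he => hh.2 he.symm, hh.1⟩
      · exact fun hh => ⟨hh.2, fun he => hh.1 he.symm⟩
    rw [e1, e2] at hfc
    unfold eta colorClass
    omega
  -- apply the hypothesis to the reduced assignment
  obtain ⟨f, ⟨hf1, hf2⟩, hf3⟩ := h L' hL'card
  refine ⟨f, ⟨⟨fun v => Finset.erase_subset _ _ (hf1 v), hf2⟩, ?_⟩⟩
  intro c hex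
  obtain ⟨v0, hv0⟩ := hex
  have hcP : c ∈ P := Finset.mem_biUnion.2 ⟨v0, Finset.mem_univ _, hv0⟩
  have hx1 := hxU c
  have hx2 := hxLo c hcP
  have h1 : PropAux.qq L k c * k ≤ eta L' c := by
    refine PropAux.sub_helper1 (eta L c) (colorClass g c) _ _ ?_ (PropAux.qmul_le L k c)
      (hsplit c)
    unfold PropAux.Uc at hx1
    exact hx1
  have h2 : eta L' c ≤ (PropAux.qq L k c +
      (if eta L c % (k+1) = 0 then 0 else 1)) * k := by
    refine PropAux.sub_helper2 (eta L c) (colorClass g c) _ _ ?_ (hsplit c)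
    unfold PropAux.Lo at hx2
    exact hx2
  have hcl : colorClass f c = eta L' c / k ∨ colorClass f c = (eta L' c + k - 1) / k := by
    by_cases hex' : ∃ v, c ∈ L' v
    · exact hf3 c hex'
    · push_neg at hex'
      left
      have hcc : colorClass f c = 0 := by
        unfold colorClass
        rw [Finset.card_eq_zero, Finset.filter_eq_empty_iff]
        intro v _ he
        exact hex' v (he ▸ hf1 v)
      have hee : eta L' c = 0 := by
        unfold eta
        rw [Finset.card_eq_zero, Finset.filter_eq_empty_iff]
        intro v _ he
        exact hex' v he
      rw [hcc, hee]
      simp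
  exact PropAux.core k (PropAux.qq L k c) (eta L c % (k+1)) (eta L c) (eta L' c)
    (colorClass f c) hk (PropAux.eta_eq L k c) (Nat.mod_lt _ (by omega)) h1 h2 hcl
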